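/- Let A ∈ sp(4,ℂ) be nilpotent with A³ ≠ 0. Then the centralizer of A in sp(4,ℂ), namely {X ∈ sp(4,ℂ) : AX = XA}, equals the ℂ-linear span of A and A³. In particular this centralizer is a 2-dimensional abelian Lie subalgebra of sp(4,ℂ), all of whose elements are nilpotent. -/

import Mathlib

open Matrix

/-- The 4×4 standard symplectic matrix `J = [[0, I], [-I, 0]]`. -/
noncomputable def J4 : Matrix (Fin 4) (Fin 4) ℂ :=
  !![0, 0, 1, 0;
     0, 0, 0, 1;
     -1, 0, 0, 0;
     0, -1, 0, 0]

lemma J4_mul_J4 : J4 * J4 = -1 := by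
  ext i j
  fin_cases i <;> fin_cases j <;>
    simp [J4, Matrix.mul_apply, Fin.sum_univ_four, Matrix.one_apply, Matrix.vecHead,
      Matrix.vecTail]

lemma A4_zero (A : Matrix (Fin 4) (Fin 4) ℂ) (hnil : IsNilpotent A) : A ^ 4 = 0 := by
  set φ := Matrix.toLinAlgEquiv' A with hφ
  have hφnil : IsNilpotent φ := by
    obtain ⟨n, hn⟩ := hnil
    exact ⟨n, by rw [hφ, ← map_pow, hn, map_zero]⟩
  have hc : φ.charpoly = Polynomial.X ^ Module.finrank ℂ (Fin 4 → ℂ) :=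
    hφnil.charpoly_eq_X_pow_finrank
  have h4 : φ ^ 4 = 0 := by
    have h := LinearMap.aeval_self_charpoly φ
    rw [hc] at h
    simpa using h
  apply Matrix.toLinAlgEquiv'.injective
  rw [map_pow, map_zero]
  exact h4

lemma poly_of_commute (A X : Matrix (Fin 4) (Fin 4) ℂ) (hA4 : A ^ 4 = 0)
    (hA3 : A ^ 3 ≠ 0) (hXc : A * X = X * A) :
    ∃ c0 c1 c2 c3 : ℂ, X = c0 • 1 + c1 • A + c2 • A ^ 2 + c3 • A ^ 3 := by
  have f0 : ((0 : Fin 4) : ℕ) = 0 := rfl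
  have f1 : ((1 : Fin 4) : ℕ) = 1 := rfl
  have f2 : ((2 : Fin 4) : ℕ) = 2 := rfl
  have f3 : ((3 : Fin 4) : ℕ) = 3 := rfl
  have hpow : ∀ n : ℕ, 4 ≤ n → A ^ n = 0 := fun n hn => pow_eq_zero_of_le hn hA4
  -- choose a cyclic vector
  obtain ⟨i, j, hij⟩ : ∃ i j, (A ^ 3) i j ≠ 0 := by
    by_contra h
    push_neg at h
    exact hA3 (Matrix.ext fun i j => h i j)
  set v : Fin 4 → ℂ := Pi.single j 1 with hv
  have hv3 : (A ^ 3) *ᵥ v ≠ 0 := by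
    intro h
    apply hij
    have := congrFun h i
    simpa [hv] using this
  set w : Fin 4 → (Fin 4 → ℂ) := fun k => (A ^ (k : ℕ)) *ᵥ v with hw
  -- auxiliary: A^m kills A^k v when m+k ≥ 4
  have hkill : ∀ m k : ℕ, 4 ≤ m + k → (A ^ m) *ᵥ ((A ^ k) *ᵥ v) = 0 := by
    intro m k h
    rw [mulVec_mulVec, ← pow_add, hpow _ h, zero_mulVec]
  have hli : LinearIndependent ℂ w := by
    rw [Fintype.linearIndependent_iff]
    intro g hg
    rw [Fin.sum_univ_four] at hg
    simp only [hw, f0, f1, f2, f3] at hg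
    have app : ∀ m : ℕ, (A ^ m) *ᵥ (g 0 • ((A^(0:ℕ)) *ᵥ v) + g 1 • ((A^(1:ℕ)) *ᵥ v)
        + g 2 • ((A^(2:ℕ)) *ᵥ v) + g 3 • ((A^(3:ℕ)) *ᵥ v)) = 0 := by
      intro m; rw [hg, mulVec_zero]
    have h0 : g 0 = 0 := by
      have := app 3
      simp only [mulVec_add, mulVec_smul, hkill 3 1 (by norm_num),
        hkill 3 2 (by norm_num), hkill 3 3 (by norm_num), smul_zero, add_zero] at this
      rw [mulVec_mulVec, ← pow_add] at this
      exact (smul_eq_zero.mp this).resolve_right (by simpa using hv3)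
    have h1 : g 1 = 0 := by
      have := app 2
      simp only [mulVec_add, mulVec_smul, hkill 2 2 (by norm_num),
        hkill 2 3 (by norm_num), smul_zero, add_zero] at this
      rw [mulVec_mulVec, mulVec_mulVec, ← pow_add, ← pow_add] at this
      rw [h0, zero_smul, zero_add] at this
      exact (smul_eq_zero.mp this).resolve_right (by simpa using hv3)
    have h2 : g 2 = 0 := by
      have := app 1
      simp only [mulVec_add, mulVec_smul, hkill 1 3 (by norm_num), smul_zero, add_zero] at this
      rw [mulVec_mulVec, mulVec_mulVec, mulVec_mulVec, ← pow_add, ← pow_add, ← pow_add] at this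
      rw [h0, zero_smul, zero_add, h1, zero_smul, zero_add] at this
      exact (smul_eq_zero.mp this).resolve_right (by simpa using hv3)
    have h3 : g 3 = 0 := by
      rw [h0, zero_smul, zero_add, h1, zero_smul, zero_add, h2, zero_smul, zero_add] at hg
      exact (smul_eq_zero.mp hg).resolve_right (by simpa using hv3)
    intro k; fin_cases k <;> assumption
  have hcard : Fintype.card (Fin 4) = Module.finrank ℂ (Fin 4 → ℂ) := by simp
  let b : Module.Basis (Fin 4) ℂ (Fin 4 → ℂ) := basisOfLinearIndependentOfCardEqFinrank hli hcard
  have hb : ∀ k, b k = w k := fun k => by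
    simp [b, coe_basisOfLinearIndependentOfCardEqFinrank]
  set c : Fin 4 → ℂ := fun k => b.repr (X *ᵥ v) k with hc
  have hXv : X *ᵥ v = ∑ k, c k • w k := by
    conv_lhs => rw [← b.sum_repr (X *ᵥ v)]
    exact Finset.sum_congr rfl fun k _ => by rw [hb k]
  set P : Matrix (Fin 4) (Fin 4) ℂ := ∑ k : Fin 4, c k • A ^ (k : ℕ) with hP
  have hcomm : ∀ k : ℕ, X * A ^ k = A ^ k * X :=
    fun k => ((Commute.pow_left (hXc : Commute A X) k).eq).symm
  have hswap : ∀ m n : ℕ, (A ^ m) *ᵥ ((A ^ n) *ᵥ v) = (A ^ n) *ᵥ ((A ^ m) *ᵥ v) := by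
    intro m n
    rw [mulVec_mulVec, mulVec_mulVec, ← pow_add, ← pow_add, add_comm]
  have hXP : X = P := by
    apply Matrix.toLinAlgEquiv'.injective
    apply b.ext
    intro k
    rw [hb k, Matrix.toLinAlgEquiv'_apply, Matrix.toLinAlgEquiv'_apply]
    have e1 : X *ᵥ w k = (A ^ (k : ℕ)) *ᵥ (X *ᵥ v) := by
      rw [hw]
      rw [mulVec_mulVec, mulVec_mulVec, hcomm]
    rw [e1, hXv, Fin.sum_univ_four]
    simp only [hw, mulVec_add, mulVec_smul, f0, f1, f2, f3]
    rw [hswap (k:ℕ) 0, hswap (k:ℕ) 1, hswap (k:ℕ) 2, hswap (k:ℕ) 3]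
    rw [hP, Fin.sum_univ_four]
    simp only [Matrix.add_mulVec, Matrix.smul_mulVec, f0, f1, f2, f3]
  refine ⟨c 0, c 1, c 2, c 3, ?_⟩
  rw [hXP, hP, Fin.sum_univ_four]
  simp only [f0, f1, f2, f3, pow_zero, pow_one]

set_option maxHeartbeats 1600000 in
/-- Let `A ∈ sp(4,ℂ)` be nilpotent with `A³ ≠ 0`.  Then the centralizer of `A` in
`sp(4,ℂ)` equals the `ℂ`-linear span of `A` and `A³`; in particular it is a
2-dimensional abelian Lie subalgebra of `sp(4,ℂ)` all of whose elements are
nilpotent. -/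
theorem sp4_centralizer_of_regular_nilpotent
    (A : Matrix (Fin 4) (Fin 4) ℂ)
    (hsp : Aᵀ * J4 + J4 * A = 0)
    (hnil : IsNilpotent A)
    (hA3 : A ^ 3 ≠ 0) :
    {X : Matrix (Fin 4) (Fin 4) ℂ | Xᵀ * J4 + J4 * X = 0 ∧ A * X = X * A}
        = (Submodule.span ℂ ({A, A ^ 3} : Set (Matrix (Fin 4) (Fin 4) ℂ)) : Set (Matrix (Fin 4) (Fin 4) ℂ)) ∧
    Module.finrank ℂ (Submodule.span ℂ ({A, A ^ 3} : Set (Matrix (Fin 4) (Fin 4) ℂ))) = 2 ∧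
    (∀ X ∈ Submodule.span ℂ ({A, A ^ 3} : Set (Matrix (Fin 4) (Fin 4) ℂ)),
      ∀ Y ∈ Submodule.span ℂ ({A, A ^ 3} : Set (Matrix (Fin 4) (Fin 4) ℂ)),
        X * Y = Y * X) ∧
    (∀ X ∈ Submodule.span ℂ ({A, A ^ 3} : Set (Matrix (Fin 4) (Fin 4) ℂ)),
      IsNilpotent X) := by
  have hA4 : A ^ 4 = 0 := A4_zero A hnil
  have hA2 : A ^ 2 ≠ 0 := fun h => hA3 (by rw [pow_succ, h, zero_mul])
  have z14 : A * A ^ 3 = 0 := by rw [← pow_succ']; exact hA4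
  have z41 : A ^ 3 * A = 0 := by rw [← pow_succ]; exact hA4
  have z33 : A ^ 3 * A ^ 3 = 0 := by
    rw [← pow_add]; exact pow_eq_zero_of_le (by norm_num) hA4
  have z32 : A ^ 3 * A ^ 2 = 0 := by
    rw [← pow_add]; exact pow_eq_zero_of_le (by norm_num) hA4
  have hc13 : A * A ^ 3 = A ^ 3 * A := by rw [z14, z41]
  have h1 : Aᵀ * J4 = -(J4 * A) := eq_neg_of_add_eq_zero_left hsp
  have h2 : (A ^ 2)ᵀ * J4 = J4 * A ^ 2 := by
    rw [pow_two, transpose_mul, mul_assoc, h1, mul_neg, ← mul_assoc, h1, neg_mul,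
      neg_neg, mul_assoc]
  have h3 : (A ^ 3)ᵀ * J4 = -(J4 * A ^ 3) := by
    have hT : (A ^ 3)ᵀ = Aᵀ * (A ^ 2)ᵀ := by rw [← transpose_mul, ← pow_succ]
    rw [hT, mul_assoc, h2, ← mul_assoc, h1, neg_mul, mul_assoc, ← pow_succ']
  refine ⟨?_, ?_, ?_, ?_⟩
  · ext X
    simp only [Set.mem_setOf_eq, SetLike.mem_coe, Submodule.mem_span_pair]
    constructor
    · rintro ⟨hXsp, hXcm⟩
      obtain ⟨c0, c1, c2, c3, hXP⟩ := poly_of_commute A X hA4 hA3 hXcm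
      have expand : Xᵀ * J4 + J4 * X = (2 * c0) • J4 + (2 * c2) • (J4 * A ^ 2) := by
        rw [hXP]
        simp only [transpose_add, transpose_smul, transpose_one, add_mul, smul_mul_assoc,
          mul_add, Matrix.mul_smul, Matrix.one_mul, Matrix.mul_one]
        rw [h1, h2, h3]
        module
      rw [hXsp] at expand
      have key : (2 * c0) • (1 : Matrix (Fin 4) (Fin 4) ℂ) + (2 * c2) • A ^ 2 = 0 := by
        have hJ : J4 * ((2 * c0) • 1 + (2 * c2) • A ^ 2) = 0 := by
          rw [mul_add, Matrix.mul_smul, Matrix.mul_smul, Matrix.mul_one]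
          exact expand.symm
        have h := congrArg (fun M => J4 * M) hJ
        simp only [← mul_assoc, J4_mul_J4, mul_zero, neg_mul, Matrix.one_mul, neg_eq_zero] at h
        simpa [mul_add, Matrix.mul_smul] using h
      have hc0 : c0 = 0 := by
        have h := congrArg (fun M => M * A ^ 2) key
        simp only [add_mul, smul_mul_assoc, Matrix.one_mul, zero_mul, ← pow_add, hA4,
          smul_zero, add_zero] at h
        have := (smul_eq_zero.mp h).resolve_right hA2
        linear_combination this / 2
      have hc2 : c2 = 0 := by
        rw [hc0, mul_zero, zero_smul, zero_add] at key
        have := (smul_eq_zero.mp key).resolve_right hA2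
        linear_combination this / 2
      exact ⟨c1, c3, by rw [hXP, hc0, hc2]; simp⟩
    · rintro ⟨a, b, rfl⟩
      constructor
      · simp only [transpose_add, transpose_smul, add_mul, smul_mul_assoc, mul_add,
          Matrix.mul_smul, h1, h3]
        module
      · simp only [mul_add, add_mul, mul_smul_comm, smul_mul_assoc, hc13]
  · have hr : Set.range ![A, A ^ 3] = {A, A ^ 3} := by
      ext x
      simp only [Set.mem_range, Fin.exists_fin_two, Matrix.cons_val_zero, Matrix.cons_val_one,
        Matrix.head_cons, Set.mem_insert_iff, Set.mem_singleton_iff]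
      tauto
    have hli2 : LinearIndependent ℂ ![A, A ^ 3] := by
      rw [LinearIndependent.pair_iff]
      intro s t hst
      have hs : s = 0 := by
        have h := congrArg (fun M => M * A ^ 2) hst
        simp only [add_mul, smul_mul_assoc, zero_mul, z32, smul_zero, add_zero] at h
        rw [show A * A ^ 2 = A ^ 3 from (pow_succ' A 2).symm] at h
        exact (smul_eq_zero.mp h).resolve_right hA3
      refine ⟨hs, ?_⟩
      rw [hs, zero_smul, zero_add] at hst
      exact (smul_eq_zero.mp hst).resolve_right hA3
    rw [← hr, finrank_span_eq_card hli2]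
    simp
  · intro X hX Y hY
    rw [Submodule.mem_span_pair] at hX hY
    obtain ⟨a, b, rfl⟩ := hX
    obtain ⟨c, d, rfl⟩ := hY
    simp only [mul_add, add_mul, mul_smul_comm, smul_mul_assoc, hc13]
    module
  · intro X hX
    rw [Submodule.mem_span_pair] at hX
    obtain ⟨a, b, rfl⟩ := hX
    refine ⟨4, ?_⟩
    have hsq : (a • A + b • A ^ 3) ^ 2 = (a * a) • A ^ 2 := by
      rw [pow_two, add_mul, mul_add, mul_add]
      simp only [smul_mul_assoc, mul_smul_comm, smul_smul, z14, z41, z33, smul_zero,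
        add_zero, zero_add]
      rw [pow_two A]
    rw [show (a • A + b • A ^ 3) ^ 4 = ((a • A + b • A ^ 3) ^ 2) ^ 2 by rw [← pow_mul],
      hsq, smul_pow, ← pow_mul]
    norm_num [hA4]
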